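/- For Δ > Δ_min, the normalisation constant c = c(Δ) solving 1/(1-ε) = c·Φ(Δ₋/2) + Φ(Δ₊/2) is differentiable in Δ with derivative c'(Δ) = -c(Δ)·φ(Δ₋/2)/Φ(Δ₋/2). Moreover ∂Δ₊/∂Δ = Δ₋/Δ - 2c'/(Δc) and ∂Δ₋/∂Δ = Δ₊/Δ + 2c'/(Δc). -/

import Mathlib

open MeasureTheory ProbabilityTheory Real Set
open scoped ENNReal

noncomputable section

/-- Standard normal probability density function. -/
def stdphi (x : ℝ) : ℝ := (Real.sqrt (2 * Real.pi))⁻¹ * Real.exp (-x ^ 2 / 2)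

/-- Standard normal cumulative distribution function. -/
def stdPhi (x : ℝ) : ℝ := ((gaussianReal 0 1) (Set.Iic x)).toReal

/-- Standard normal quantile function. -/
def stdPhiInv (p : ℝ) : ℝ := sInf {x : ℝ | p ≤ stdPhi x}

/-- Minimum distinction gap under corruption, `Δ_min = 2 Φ⁻¹(1/(2(1-ε)))`. -/
def Dmin (ε : ℝ) : ℝ := 2 * stdPhiInv (1 / (2 * (1 - ε)))

/-- `ε`-corrupted mixture `(1-ε) μ + ε H` of two measures on `ℝ`. -/
def mix (ε : ℝ) (μ H : Measure ℝ) : Measure ℝ :=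
  ENNReal.ofReal (1 - ε) • μ + ENNReal.ofReal ε • H

open Classical in
/-- Kullback–Leibler divergence. -/
def KLdiv (P Q : Measure ℝ) : ℝ≥0∞ :=
  if P ≪ Q ∧ Integrable (fun x => Real.log (P.rnDeriv Q x).toReal) P then
    ENNReal.ofReal (∫ x, Real.log (P.rnDeriv Q x).toReal ∂P) else ⊤

/-- Corrupted Gaussian divergence `kl^ε_G(x, y)`: the infimum over pairs of corruption
distributions of the KL divergence between the corrupted unit-variance Gaussians. -/
def klG (ε x y : ℝ) : ℝ≥0∞ :=
  ⨅ (H : Measure ℝ) (_ : IsProbabilityMeasure H) (H' : Measure ℝ)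
    (_ : IsProbabilityMeasure H'),
    KLdiv (mix ε (gaussianReal x 1) H) (mix ε (gaussianReal y 1) H')

/-- (Lower) median of a probability measure on `ℝ`. -/
def measMed (μ : Measure ℝ) : ℝ := sInf {x : ℝ | 1 / 2 ≤ (μ (Set.Iic x)).toReal}

/-- Quantile function of a probability measure on `ℝ`. -/
def quantile (μ : Measure ℝ) (p : ℝ) : ℝ := sInf {x : ℝ | p ≤ (μ (Set.Iic x)).toReal}

/-- Empirical median of a finite sample. -/
def empMed {n : ℕ} (X : Fin n → ℝ) : ℝ :=
  sInf {x : ℝ | (n : ℝ) ≤ 2 * Nat.card {i : Fin n // X i ≤ x}}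

/-- The variance proxy `s_ε` for the concentration of the median under corruption. -/
def sEps (ε : ℝ) : ℝ :=
  (Real.sqrt (ε / 2 / Real.log (1 / (1 - 2 * ε))) +
      Real.sqrt ((1 - 2 * ε) / (4 * Real.log ((1 - ε) / ε)))) /
    ((1 - ε) * stdphi (Dmin ε / 2 + 1))

/-- Mean of a measure on `ℝ`. -/
def meanOf (μ : Measure ℝ) : ℝ := ∫ x, x ∂μ

/-- Corrupted KL-inf `KL^ε_inf(η, x; L)`. -/
def KLinf (ε : ℝ) (η : Measure ℝ) (x : ℝ) (L : Set (Measure ℝ)) : ℝ≥0∞ :=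
  ⨅ (κ : Measure ℝ) (_ : κ ∈ L) (_ : x ≤ meanOf κ) (H : Measure ℝ)
    (_ : IsProbabilityMeasure H) (H' : Measure ℝ) (_ : IsProbabilityMeasure H'),
    KLdiv (mix ε η H) (mix ε κ H')

lemma stdphi_eq : stdphi = gaussianPDFReal 0 1 := by
  ext t
  simp [stdphi, gaussianPDFReal, neg_div]

lemma stdPhi_eq (x : ℝ) : stdPhi x = ∫ t in Set.Iic x, stdphi t := by
  rw [stdPhi, gaussianReal_apply_eq_integral _ one_ne_zero, ENNReal.toReal_ofReal, stdphi_eq]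
  exact setIntegral_nonneg measurableSet_Iic fun t _ => gaussianPDFReal_nonneg 0 1 t

lemma stdphi_cont : Continuous stdphi := by
  unfold stdphi; fun_prop

lemma stdphi_integrable : Integrable stdphi := by
  rw [stdphi_eq]; exact integrable_gaussianPDFReal 0 1

lemma stdphi_pos (x : ℝ) : 0 < stdphi x := by
  unfold stdphi
  positivity

lemma stdPhi_hasStrictDerivAt (x : ℝ) : HasStrictDerivAt stdPhi (stdphi x) x := by
  have h0 : ∀ y : ℝ, stdPhi y = stdPhi 0 + ∫ t in (0:ℝ)..y, stdphi t := by
    intro y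
    rw [stdPhi_eq, stdPhi_eq, ← intervalIntegral.integral_Iic_sub_Iic
      stdphi_integrable.integrableOn stdphi_integrable.integrableOn]
    ring
  have h := intervalIntegral.integral_hasStrictDerivAt_right
    (stdphi_integrable.intervalIntegrable) (stdphi_cont.stronglyMeasurableAtFilter _ _)
    stdphi_cont.continuousAt (a := 0) (b := x)
  have heq : stdPhi = fun y => stdPhi 0 + ∫ t in (0:ℝ)..y, stdphi t := funext h0
  rw [heq]
  exact h.const_add (stdPhi 0)

lemma stdPhi_nonneg (x : ℝ) : 0 ≤ stdPhi x := ENNReal.toReal_nonneg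

lemma stdPhi_pos (x : ℝ) : 0 < stdPhi x := by
  have h := intervalIntegral.integral_Iic_sub_Iic (f := stdphi) (μ := volume)
    (a := x - 1) (b := x) stdphi_integrable.integrableOn stdphi_integrable.integrableOn
  have hpos : 0 < ∫ t in (x-1)..x, stdphi t :=
    intervalIntegral.intervalIntegral_pos_of_pos
      (stdphi_integrable.intervalIntegrable) stdphi_pos (by linarith)
  have h2 : (0:ℝ) ≤ stdPhi (x - 1) := stdPhi_nonneg _
  rw [stdPhi_eq] at h2 ⊢
  linarith

lemma stdPhi_mono : Monotone stdPhi := by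
  intro a b hab
  rw [stdPhi_eq, stdPhi_eq]
  exact setIntegral_mono_set stdphi_integrable.integrableOn
    (Filter.Eventually.of_forall fun t => (stdphi_pos t).le)
    (Filter.Eventually.of_forall (Iic_subset_Iic.mpr hab))

lemma stdPhi_zero : stdPhi 0 = 1 / 2 := by
  have htot : (∫ t in Set.Iic (0:ℝ), stdphi t) + ∫ t in Set.Ioi (0:ℝ), stdphi t = 1 := by
    rw [intervalIntegral.integral_Iic_add_Ioi stdphi_integrable.integrableOn
      stdphi_integrable.integrableOn]
    rw [stdphi_eq]; exact integral_gaussianPDFReal_eq_one 0 one_ne_zero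
  have hneg : ∀ t : ℝ, stdphi (-t) = stdphi t := fun t => by simp [stdphi, neg_sq]
  have hsym : (∫ t in Set.Iic (0:ℝ), stdphi t) = ∫ t in Set.Ioi (0:ℝ), stdphi t := by
    calc (∫ t in Set.Iic (0:ℝ), stdphi t) = ∫ t in Set.Iic (0:ℝ), stdphi (-t) := by
          simp_rw [hneg]
      _ = ∫ t in Set.Ioi (-(0:ℝ)), stdphi t := integral_comp_neg_Iic 0 stdphi
      _ = _ := by rw [neg_zero]
  rw [stdPhi_eq]
  linarith


lemma Dmin_nonneg {ε : ℝ} (hε : ε ∈ Set.Ioo (0:ℝ) (1/2)) : 0 ≤ Dmin ε := by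
  obtain ⟨h1, h2⟩ := hε
  have hp : 1 / 2 < 1 / (2 * (1 - ε)) := by
    rw [div_lt_div_iff₀ (by norm_num) (by nlinarith)]
    nlinarith
  have : 0 ≤ stdPhiInv (1 / (2 * (1 - ε))) := by
    apply Real.sInf_nonneg
    intro x hx
    by_contra hneg
    push_neg at hneg
    have := stdPhi_mono hneg.le
    rw [stdPhi_zero] at this
    exact absurd (le_trans hx this) (not_le.mpr hp)
  unfold Dmin; linarith

lemma stdPhi_contDiff : ContDiff ℝ 1 stdPhi := by
  rw [contDiff_one_iff_deriv]
  have hd : ∀ x, HasDerivAt stdPhi (stdphi x) x := fun x => (stdPhi_hasStrictDerivAt x).hasDerivAt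
  refine ⟨fun x => (hd x).differentiableAt, ?_⟩
  have : deriv stdPhi = stdphi := funext fun x => (hd x).deriv
  rw [this]; exact stdphi_cont

lemma key_identity {Δ t : ℝ} (hΔ : Δ ≠ 0) (ht : 0 < t) :
    t * stdphi ((Δ + 2 / Δ * Real.log t) / 2) = stdphi ((Δ - 2 / Δ * Real.log t) / 2) := by
  unfold stdphi
  have h : Real.log t + -((Δ + 2 / Δ * Real.log t) / 2) ^ 2 / 2
      = -((Δ - 2 / Δ * Real.log t) / 2) ^ 2 / 2 := by
    field_simp
    ring
  calc t * ((Real.sqrt (2 * Real.pi))⁻¹ * Real.exp (-((Δ + 2 / Δ * Real.log t) / 2) ^ 2 / 2))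
      = (Real.sqrt (2 * Real.pi))⁻¹ *
        (Real.exp (Real.log t) * Real.exp (-((Δ + 2 / Δ * Real.log t) / 2) ^ 2 / 2)) := by
        rw [Real.exp_log ht]; ring
    _ = (Real.sqrt (2 * Real.pi))⁻¹ *
        Real.exp (Real.log t + -((Δ + 2 / Δ * Real.log t) / 2) ^ 2 / 2) := by
        rw [Real.exp_add]
    _ = _ := by rw [h]

def Gfun (p : ℝ × ℝ) : ℝ :=
  p.2 * stdPhi ((p.1 + 2 / p.1 * Real.log p.2) / 2) +
    stdPhi ((p.1 - 2 / p.1 * Real.log p.2) / 2)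

lemma hasDerivAt_G_snd (Δ : ℝ) (hΔ : Δ ≠ 0) {t : ℝ} (ht : 0 < t) :
    HasDerivAt (fun t => Gfun (Δ, t)) (stdPhi ((Δ + 2 / Δ * Real.log t) / 2)) t := by
  have hlog : HasDerivAt Real.log t⁻¹ t := Real.hasDerivAt_log ht.ne'
  have hL : HasDerivAt (fun t => (Δ + 2 / Δ * Real.log t) / 2) (2 / Δ * t⁻¹ / 2) t :=
    ((hlog.const_mul (2 / Δ)).const_add Δ).div_const 2
  have hM : HasDerivAt (fun t => (Δ - 2 / Δ * Real.log t) / 2) (-(2 / Δ * t⁻¹) / 2) t :=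
    (((hlog.const_mul (2 / Δ)).const_sub Δ)).div_const 2
  have hΦL := ((stdPhi_hasStrictDerivAt ((Δ + 2 / Δ * Real.log t) / 2)).hasDerivAt).comp t hL
  have hΦM := ((stdPhi_hasStrictDerivAt ((Δ - 2 / Δ * Real.log t) / 2)).hasDerivAt).comp t hM
  have hmul := (hasDerivAt_id t).mul hΦL
  have htot := hmul.add hΦM
  refine htot.congr_deriv ?_
  simp only [Function.comp, id_eq]
  rw [← key_identity hΔ ht]
  field_simp
  ring

lemma hasFDerivAt_G {Δ₀ c₀ : ℝ} (hΔ : Δ₀ ≠ 0) (hc : 0 < c₀) :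
    HasFDerivAt Gfun
      ((c₀ * stdphi ((Δ₀ + 2 / Δ₀ * Real.log c₀) / 2)) • ContinuousLinearMap.fst ℝ ℝ ℝ +
        (stdPhi ((Δ₀ + 2 / Δ₀ * Real.log c₀) / 2)) • ContinuousLinearMap.snd ℝ ℝ ℝ)
      (Δ₀, c₀) := by
  have hfst : HasFDerivAt (fun p : ℝ × ℝ => p.1) (ContinuousLinearMap.fst ℝ ℝ ℝ) (Δ₀, c₀) :=
    hasFDerivAt_fst
  have hsnd : HasFDerivAt (fun p : ℝ × ℝ => p.2) (ContinuousLinearMap.snd ℝ ℝ ℝ) (Δ₀, c₀) :=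
    hasFDerivAt_snd
  have h2x : HasDerivAt (fun x : ℝ => 2 / x) ((0 * Δ₀ - 2 * 1) / Δ₀ ^ 2) Δ₀ :=
    (hasDerivAt_const Δ₀ 2).div (hasDerivAt_id Δ₀) hΔ
  have h2p : HasFDerivAt (fun p : ℝ × ℝ => 2 / p.1)
      (((0 * Δ₀ - 2 * 1) / Δ₀ ^ 2) • ContinuousLinearMap.fst ℝ ℝ ℝ) (Δ₀, c₀) :=
    h2x.comp_hasFDerivAt _ hfst
  have hlogp : HasFDerivAt (fun p : ℝ × ℝ => Real.log p.2)
      (c₀⁻¹ • ContinuousLinearMap.snd ℝ ℝ ℝ) (Δ₀, c₀) :=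
    by have := (Real.hasDerivAt_log hc.ne').comp_hasFDerivAt (Δ₀, c₀) hsnd; exact this
  have hmulp := h2p.mul hlogp
  have hdiv2 : ∀ y : ℝ, HasDerivAt (fun y : ℝ => y / 2) (1 / 2) y := fun y => by
    simpa using (hasDerivAt_id y).div_const 2
  have hLp := (hdiv2 _).comp_hasFDerivAt _ (hfst.add hmulp)
  have hMp := (hdiv2 _).comp_hasFDerivAt _ (hfst.sub hmulp)
  have hΦL := ((stdPhi_hasStrictDerivAt ((Δ₀ + 2 / Δ₀ * Real.log c₀) / 2)).hasDerivAt).comp_hasFDerivAt (Δ₀, c₀) hLp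
  have hΦM := ((stdPhi_hasStrictDerivAt ((Δ₀ - 2 / Δ₀ * Real.log c₀) / 2)).hasDerivAt).comp_hasFDerivAt (Δ₀, c₀) hMp
  have hterm1 := hsnd.mul hΦL
  have htot := hterm1.add hΦM
  refine htot.congr_fderiv ?_
  refine ContinuousLinearMap.ext fun p => ?_
  simp only [ContinuousLinearMap.add_apply, ContinuousLinearMap.smul_apply,
    ContinuousLinearMap.coe_fst', ContinuousLinearMap.coe_snd', smul_eq_mul,
    ContinuousLinearMap.sub_apply, Function.comp_apply, Pi.add_apply, Pi.mul_apply]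
  rw [← key_identity hΔ hc]
  field_simp
  ring

lemma contDiffAt_G {Δ₀ c₀ : ℝ} (hΔ : Δ₀ ≠ 0) (hc : 0 < c₀) :
    ContDiffAt ℝ 1 Gfun (Δ₀, c₀) := by
  have hlog : ContDiffAt ℝ 1 (fun p : ℝ × ℝ => Real.log p.2) (Δ₀, c₀) :=
    by have h : ContDiffAt ℝ 1 Real.log c₀ := Real.contDiffAt_log.mpr hc.ne'; exact h.comp (Δ₀, c₀) contDiffAt_snd
  have h2p : ContDiffAt ℝ 1 (fun p : ℝ × ℝ => 2 / p.1) (Δ₀, c₀) :=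
    contDiffAt_const.div contDiffAt_fst hΔ
  have hL : ContDiffAt ℝ 1 (fun p : ℝ × ℝ => (p.1 + 2 / p.1 * Real.log p.2) / 2) (Δ₀, c₀) :=
    (contDiffAt_fst.add (h2p.mul hlog)).div_const 2
  have hM : ContDiffAt ℝ 1 (fun p : ℝ × ℝ => (p.1 - 2 / p.1 * Real.log p.2) / 2) (Δ₀, c₀) :=
    (contDiffAt_fst.sub (h2p.mul hlog)).div_const 2
  exact (contDiffAt_snd.mul ((stdPhi_contDiff.contDiffAt).comp _ hL)).add
    ((stdPhi_contDiff.contDiffAt).comp _ hM)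

lemma hasStrictFDerivAt_G {Δ₀ c₀ : ℝ} (hΔ : Δ₀ ≠ 0) (hc : 0 < c₀) :
    HasStrictFDerivAt Gfun
      ((c₀ * stdphi ((Δ₀ + 2 / Δ₀ * Real.log c₀) / 2)) • ContinuousLinearMap.fst ℝ ℝ ℝ +
        (stdPhi ((Δ₀ + 2 / Δ₀ * Real.log c₀) / 2)) • ContinuousLinearMap.snd ℝ ℝ ℝ)
      (Δ₀, c₀) := by
  have h1 := (contDiffAt_G hΔ hc).hasStrictFDerivAt one_ne_zero
  have h2 := (hasFDerivAt_G hΔ hc).unique h1.hasFDerivAt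
  rwa [← h2] at h1

lemma G_strictMonoOn {Δ : ℝ} (hΔ : 0 < Δ) :
    StrictMonoOn (fun t => Gfun (Δ, t)) (Set.Ioi 0) := by
  apply strictMonoOn_of_deriv_pos (convex_Ioi 0)
  · intro t ht
    exact (hasDerivAt_G_snd Δ hΔ.ne' ht).continuousAt.continuousWithinAt
  · intro t ht
    rw [interior_Ioi] at ht
    rw [(hasDerivAt_G_snd Δ hΔ.ne' ht).deriv]
    exact stdPhi_pos _

lemma implicit_core {Δ₀ c₀ y₀ : ℝ} (hΔ : 0 < Δ₀) (hc : 0 < c₀)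
    (hy : Gfun (Δ₀, c₀) = y₀) {c : ℝ → ℝ}
    (hcev : ∀ᶠ Δ in nhds Δ₀, 0 < c Δ ∧ Gfun (Δ, c Δ) = y₀) (hc0 : c Δ₀ = c₀) :
    HasDerivAt c
      (-(c₀ * stdphi ((Δ₀ + 2 / Δ₀ * Real.log c₀) / 2) /
        stdPhi ((Δ₀ + 2 / Δ₀ * Real.log c₀) / 2))) Δ₀ := by
  set l := (Δ₀ + 2 / Δ₀ * Real.log c₀) / 2 with hl
  set a := c₀ * stdphi l with ha
  set b := stdPhi l with hb
  have hbpos : 0 < b := stdPhi_pos l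
  set A₁ : ℝ × ℝ →L[ℝ] ℝ × ℝ := (ContinuousLinearMap.fst ℝ ℝ ℝ).prod
    (a • ContinuousLinearMap.fst ℝ ℝ ℝ + b • ContinuousLinearMap.snd ℝ ℝ ℝ) with hA₁
  set A₂ : ℝ × ℝ →L[ℝ] ℝ × ℝ := (ContinuousLinearMap.fst ℝ ℝ ℝ).prod
    ((-(a / b)) • ContinuousLinearMap.fst ℝ ℝ ℝ + b⁻¹ • ContinuousLinearMap.snd ℝ ℝ ℝ) with hA₂
  have hinv1 : Function.LeftInverse A₂ A₁ := by
    rintro ⟨u, v⟩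
    simp only [hA₁, hA₂, ContinuousLinearMap.prod_apply, ContinuousLinearMap.add_apply,
      ContinuousLinearMap.smul_apply, ContinuousLinearMap.coe_fst', ContinuousLinearMap.coe_snd',
      smul_eq_mul]
    refine Prod.ext rfl ?_
    simp only
    field_simp
    ring
  have hinv2 : Function.RightInverse A₂ A₁ := by
    rintro ⟨u, v⟩
    simp only [hA₁, hA₂, ContinuousLinearMap.prod_apply, ContinuousLinearMap.add_apply,
      ContinuousLinearMap.smul_apply, ContinuousLinearMap.coe_fst', ContinuousLinearMap.coe_snd',
      smul_eq_mul]
    refine Prod.ext rfl ?_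
    simp only
    field_simp
    ring
  set E := ContinuousLinearEquiv.equivOfInverse A₁ A₂ hinv1 hinv2 with hE
  set Fm : ℝ × ℝ → ℝ × ℝ := fun p => (p.1, Gfun p) with hFm
  have hGs := hasStrictFDerivAt_G hΔ.ne' hc
  have hFms : HasStrictFDerivAt Fm (E : ℝ × ℝ →L[ℝ] ℝ × ℝ) (Δ₀, c₀) :=
    hasStrictFDerivAt_fst.prodMk hGs
  have hFp₀ : Fm (Δ₀, c₀) = (Δ₀, y₀) := by simp [hFm, hy]
  set g := hFms.localInverse Fm _ _ with hg
  have hrev : ∀ᶠ y in nhds (Δ₀, y₀), Fm (g y) = y := by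
    rw [← hFp₀]; exact hFms.eventually_right_inverse
  have hcontg : ContinuousAt g (Δ₀, y₀) := by
    rw [← hFp₀]; exact hFms.localInverse_continuousAt
  have hgp₀ : g (Δ₀, y₀) = (Δ₀, c₀) := by
    rw [← hFp₀]; exact hFms.localInverse_apply_image
  have htend : Filter.Tendsto (fun Δ : ℝ => (Δ, y₀)) (nhds Δ₀) (nhds (Δ₀, y₀)) :=
    (continuousAt_id.prodMk continuousAt_const)
  set h : ℝ → ℝ := fun Δ => (g (Δ, y₀)).2 with hh
  have hconth : ContinuousAt h Δ₀ :=
    continuous_snd.continuousAt.comp (ContinuousAt.comp (f := fun Δ : ℝ => (Δ, y₀)) hcontg htend)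
  have hhΔ₀ : h Δ₀ = c₀ := by show (g (Δ₀, y₀)).2 = c₀; rw [hgp₀]
  have ev1 : ∀ᶠ Δ in nhds Δ₀, Fm (g (Δ, y₀)) = (Δ, y₀) := htend.eventually hrev
  have evh : ∀ᶠ Δ in nhds Δ₀, 0 < h Δ := by
    refine hconth.eventually ?_
    rw [hhΔ₀]
    exact eventually_gt_nhds hc
  have evΔ : ∀ᶠ Δ in nhds Δ₀, 0 < Δ := eventually_gt_nhds hΔ
  have heq : c =ᶠ[nhds Δ₀] h := by
    filter_upwards [ev1, evh, evΔ, hcev] with Δ h1 h2 h3 h4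
    have hfst : (g (Δ, y₀)).1 = Δ := congrArg Prod.fst h1
    have hgΔ : g (Δ, y₀) = (Δ, h Δ) := Prod.ext hfst rfl
    have hGh : Gfun (Δ, h Δ) = y₀ := by
      have hsnd := congrArg Prod.snd h1
      simp only [hFm] at hsnd
      rwa [hgΔ] at hsnd
    exact (G_strictMonoOn h3).injOn (Set.mem_Ioi.mpr h4.1) (Set.mem_Ioi.mpr h2)
      (by show Gfun (Δ, c Δ) = Gfun (Δ, h Δ); rw [h4.2, hGh])
  have hsymm : HasStrictFDerivAt g (E.symm : ℝ × ℝ →L[ℝ] ℝ × ℝ) (Δ₀, y₀) := by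
    rw [← hFp₀]; exact hFms.to_localInverse
  have hline : HasDerivAt (fun Δ : ℝ => (Δ, y₀)) ((1 : ℝ), (0 : ℝ)) Δ₀ :=
    (hasDerivAt_id Δ₀).prodMk (hasDerivAt_const Δ₀ y₀)
  have hcomp : HasDerivAt (fun Δ => g (Δ, y₀)) (E.symm (1, 0)) Δ₀ :=
    by have := hsymm.hasFDerivAt.comp_hasDerivAt Δ₀ hline; exact this
  have hderivh : HasDerivAt h ((ContinuousLinearMap.snd ℝ ℝ ℝ) (E.symm (1, 0))) Δ₀ :=
    (ContinuousLinearMap.snd ℝ ℝ ℝ).hasFDerivAt.comp_hasDerivAt Δ₀ hcomp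
  have hval : (ContinuousLinearMap.snd ℝ ℝ ℝ) (E.symm ((1 : ℝ), (0 : ℝ))) = -(a / b) := by
    simp [hE, hA₂, ContinuousLinearEquiv.symm_equivOfInverse]
  rw [hval] at hderivh
  have hfinal := hderivh.congr_of_eventuallyEq heq
  convert hfinal using 1

lemma Gfun_eq (Δ t : ℝ) :
    Gfun (Δ, t) = t * stdPhi ((Δ - 2 / Δ * Real.log (1 / t)) / 2) +
      stdPhi ((Δ + 2 / Δ * Real.log (1 / t)) / 2) := by
  simp only [Gfun, one_div, Real.log_inv, mul_neg, sub_neg_eq_add, ← sub_eq_add_neg]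


/-- derivative of the normalisation constant `c(Δ)` and of `Δ₊`, `Δ₋`. -/
theorem normalisation_constant_hasDerivAt (ε : ℝ) (c : ℝ → ℝ)
    (hε : ε ∈ Set.Ioo (0 : ℝ) (1 / 2))
    (hc : ∀ Δ : ℝ, Dmin ε < Δ → 0 < c Δ ∧
      1 / (1 - ε) =
        c Δ * stdPhi ((Δ - 2 / Δ * Real.log (1 / c Δ)) / 2) +
          stdPhi ((Δ + 2 / Δ * Real.log (1 / c Δ)) / 2)) :
    ∀ Δ : ℝ, Dmin ε < Δ →
      HasDerivAt c
          (-(c Δ * stdphi ((Δ - 2 / Δ * Real.log (1 / c Δ)) / 2) /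
            stdPhi ((Δ - 2 / Δ * Real.log (1 / c Δ)) / 2))) Δ ∧
        HasDerivAt (fun d => d + 2 / d * Real.log (1 / c d))
          ((Δ - 2 / Δ * Real.log (1 / c Δ)) / Δ - 2 * deriv c Δ / (Δ * c Δ)) Δ ∧
        HasDerivAt (fun d => d - 2 / d * Real.log (1 / c d))
          ((Δ + 2 / Δ * Real.log (1 / c Δ)) / Δ + 2 * deriv c Δ / (Δ * c Δ)) Δ := by
  intro Δ hΔ
  have hΔpos : 0 < Δ := lt_of_le_of_lt (Dmin_nonneg hε) hΔ
  obtain ⟨hcpos, hceq⟩ := hc Δ hΔ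
  have hGy : Gfun (Δ, c Δ) = 1 / (1 - ε) := by rw [Gfun_eq, ← hceq]
  have hcev : ∀ᶠ d in nhds Δ, 0 < c d ∧ Gfun (d, c d) = 1 / (1 - ε) := by
    filter_upwards [eventually_gt_nhds hΔ] with d hd
    obtain ⟨h1, h2⟩ := hc d hd
    exact ⟨h1, by rw [Gfun_eq, ← h2]⟩
  have harg : (Δ - 2 / Δ * Real.log (1 / c Δ)) / 2 = (Δ + 2 / Δ * Real.log (c Δ)) / 2 := by
    rw [one_div, Real.log_inv]; ring
  have hd1 : HasDerivAt c
      (-(c Δ * stdphi ((Δ - 2 / Δ * Real.log (1 / c Δ)) / 2) /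
        stdPhi ((Δ - 2 / Δ * Real.log (1 / c Δ)) / 2))) Δ := by
    rw [harg]
    exact implicit_core hΔpos hcpos hGy hcev rfl
  refine ⟨hd1, ?_, ?_⟩
  all_goals {
    have hdc : HasDerivAt c (deriv c Δ) Δ := by rw [hd1.deriv]; exact hd1
    have hlogc : HasDerivAt (fun d => Real.log (1 / c d)) (-((c Δ)⁻¹ * deriv c Δ)) Δ := by
      have h1 : HasDerivAt (fun d => Real.log (c d)) ((c Δ)⁻¹ * deriv c Δ) Δ :=
        (Real.hasDerivAt_log hcpos.ne').comp Δ hdc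
      have h2 := h1.neg
      have hfe : (fun d => -Real.log (c d)) = fun d => Real.log (1 / c d) :=
        funext fun d => by rw [one_div, Real.log_inv]
      rw [← hfe]; exact h2
    have h2d : HasDerivAt (fun d : ℝ => 2 / d) ((0 * Δ - 2 * 1) / Δ ^ 2) Δ :=
      (hasDerivAt_const Δ 2).div (hasDerivAt_id Δ) hΔpos.ne'
    have hprod := h2d.mul hlogc
    first
      | (have htot := (hasDerivAt_id Δ).add hprod
         refine htot.congr_deriv ?_
         rw [one_div, Real.log_inv]
         field_simp
         ring)
      | (have htot := (hasDerivAt_id Δ).sub hprod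
         refine htot.congr_deriv ?_
         rw [one_div, Real.log_inv]
         field_simp
         ring)
  }
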